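/- arXiv:2308.10568 — 6 statements merged into one kernel-verified Lean document; each statement's English description precedes it below -/
import Mathlib

section
/- Let (Ω, ℱ, ℙ) be a probability space carrying independent random variables Z and B, with Z standard normal and B Bernoulli with parameter p ∈ (0,1). Fix s > 0, σ > 0, t > 0, μ, q ∈ ℝ, κ ∈ ℝ, and set S⁰ := s e^{(μ−q−σ²/2)t + σ√t Z} and S := S⁰ (1 + κB). Then Cov(S, B) = κ 𝔼[S⁰] Var(B) = κ s e^{(μ−q)t} p(1−p); moreover if Var(S) > 0, the correlation between S and B equals κ 𝔼[S⁰] √(Var(B)/Var(S)). (This is the stock–default correlation identity of Proposition 1, with B playing the role of the first-to-default indicator J_t, whose success probability is p = 1 − e^{−λt}.) -/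
open MeasureTheory intervalIntegral Real ProbabilityTheory Filter Asymptotics

/-- The standard Gaussian measure on ℝ. -/
noncomputable def gaussMeasure : Measure ℝ := gaussianReal 0 1

/-- The standard normal CDF. -/
noncomputable def Phi (x : ℝ) : ℝ :=
  ∫ u in Set.Iic x, Real.exp (-u ^ 2 / 2) / Real.sqrt (2 * Real.pi)

/-- The standard normal density. -/
noncomputable def gaussPdf (x : ℝ) : ℝ := Real.exp (-x ^ 2 / 2) / Real.sqrt (2 * Real.pi)

/-- Black–Scholes `d₁` with volatility `σ` and drift `m`. -/
noncomputable def d1 (σ m s k t : ℝ) : ℝ :=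
  (Real.log (s / k) + (m + σ ^ 2 / 2) * t) / (σ * Real.sqrt t)

/-- Black–Scholes `d₂` with volatility `σ` and drift `m`. -/
noncomputable def d2 (σ m s k t : ℝ) : ℝ := d1 σ m s k t - σ * Real.sqrt t

/-- Black–Scholes call price (undiscounted) with volatility `σ` and drift `m`. -/
noncomputable def BSC (σ m s k t : ℝ) : ℝ :=
  s * Real.exp (m * t) * Phi (d1 σ m s k t) - k * Phi (d2 σ m s k t)

/-- Black–Scholes put price (undiscounted) with volatility `σ` and drift `m`. -/
noncomputable def BSP (σ m s k t : ℝ) : ℝ :=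
  k * Phi (-d2 σ m s k t) - s * Real.exp (m * t) * Phi (-d1 σ m s k t)

/-- The function `Υ₀` from the ATM forward valuation formula. -/
noncomputable def Ups0 (t x y : ℝ) : ℝ :=
  y / (x * Real.sqrt (2 * x + y ^ 2)) * (Phi (Real.sqrt ((2 * x + y ^ 2) * t)) - 1 / 2)
    - 1 / x * (Real.exp (-x * t) * Phi (y * Real.sqrt t) - 1 / 2)

/-- The second-order approximation `Υ̃` of the generalized `Υ` function. -/
noncomputable def UpsTilde (t x y z : ℝ) : ℝ :=
  Ups0 t x y
    + 2 / Real.sqrt (2 * x + y ^ 2) * (Phi (Real.sqrt ((2 * x + y ^ 2) * t)) - 1 / 2)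
      * (z - y / 2 * z ^ 2)

/-- Covariance of two real random variables. -/
noncomputable def cov {Ω : Type*} [MeasurableSpace Ω] (P : Measure Ω) (X Y : Ω → ℝ) : ℝ :=
  (∫ ω, X ω * Y ω ∂P) - (∫ ω, X ω ∂P) * (∫ ω, Y ω ∂P)

/-- Variance of a real random variable. -/
noncomputable def var {Ω : Type*} [MeasurableSpace Ω] (P : Measure Ω) (X : Ω → ℝ) : ℝ :=
  cov P X X

/-- Correlation of two real random variables. -/
noncomputable def corr {Ω : Type*} [MeasurableSpace Ω] (P : Measure Ω) (X Y : Ω → ℝ) : ℝ :=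
  cov P X Y / Real.sqrt (var P X * var P Y)

lemma exp_mul_gaussPdfReal (c x : ℝ) :
    rexp (c * x) * gaussianPDFReal 0 1 x = rexp (c ^ 2 / 2) * gaussianPDFReal c 1 x := by
  simp only [gaussianPDFReal, NNReal.coe_one, mul_one, sub_zero]
  rw [mul_left_comm, mul_left_comm (rexp (c ^ 2 / 2)), ← Real.exp_add, ← Real.exp_add]
  congr 1
  rw [Real.exp_eq_exp]
  ring

lemma integrable_exp_mul_gauss (c : ℝ) :
    Integrable (fun x => rexp (c * x)) (gaussianReal 0 1) := by
  rw [gaussianReal_of_var_ne_zero 0 one_ne_zero,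
    integrable_withDensity_iff (measurable_gaussianPDF 0 1)
      (ae_of_all _ fun x => ENNReal.ofReal_lt_top)]
  have h : ∀ x : ℝ, rexp (c * x) * (gaussianPDF 0 1 x).toReal
      = rexp (c ^ 2 / 2) * gaussianPDFReal c 1 x := fun x => by
    rw [gaussianPDF, ENNReal.toReal_ofReal (gaussianPDFReal_nonneg 0 1 x),
      exp_mul_gaussPdfReal]
  simp_rw [h]
  exact (integrable_gaussianPDFReal c 1).const_mul _

lemma integral_exp_mul_gauss (c : ℝ) :
    ∫ x, rexp (c * x) ∂(gaussianReal 0 1) = rexp (c ^ 2 / 2) := by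
  rw [gaussianReal_of_var_ne_zero 0 one_ne_zero]
  have hd : gaussianPDF 0 1 = fun x => ((gaussianPDFReal 0 1 x).toNNReal : ENNReal) := by
    funext x; rw [gaussianPDF]; rfl
  rw [hd, integral_withDensity_eq_integral_smul
    ((measurable_gaussianPDFReal 0 1).real_toNNReal) _]
  have h : ∀ x : ℝ, (Real.toNNReal (gaussianPDFReal 0 1 x)) • rexp (c * x)
      = rexp (c ^ 2 / 2) * gaussianPDFReal c 1 x := fun x => by
    rw [NNReal.smul_def, smul_eq_mul, Real.coe_toNNReal _ (gaussianPDFReal_nonneg 0 1 x),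
      mul_comm, exp_mul_gaussPdfReal]
  simp_rw [h]
  rw [MeasureTheory.integral_const_mul, integral_gaussianPDFReal_eq_one c one_ne_zero, mul_one]

/-- Stock–default covariance and correlation identity (Proposition 1):
`Cov(S, B) = κ 𝔼[S⁰] Var(B) = κ s e^{(μ−q)t} p(1−p)`, and when `Var(S) > 0`
the correlation between `S` and `B` equals `κ 𝔼[S⁰] √(Var(B)/Var(S))`. -/
theorem stock_default_correlation
    {Ω : Type*} [MeasurableSpace Ω] (P : Measure Ω) [IsProbabilityMeasure P]
    (Z B : Ω → ℝ) (hmZ : Measurable Z) (hmB : Measurable B)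
    (hindep : IndepFun Z B P)
    (hZ : Measure.map Z P = gaussianReal 0 1)
    (p : ℝ) (hp : p ∈ Set.Ioo (0 : ℝ) 1)
    (hB01 : ∀ ω, B ω = 0 ∨ B ω = 1)
    (hBp : P {ω | B ω = 1} = ENNReal.ofReal p)
    (s σ t μ q κ : ℝ) (hs : 0 < s) (hσ : 0 < σ) (ht : 0 < t)
    (S0 S : Ω → ℝ)
    (hS0 : S0 = fun ω => s * Real.exp ((μ - q - σ ^ 2 / 2) * t + σ * Real.sqrt t * Z ω))
    (hS : S = fun ω => S0 ω * (1 + κ * B ω)) :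
    cov P S B = κ * (∫ ω, S0 ω ∂P) * var P B
      ∧ cov P S B = κ * (s * Real.exp ((μ - q) * t)) * (p * (1 - p))
      ∧ (0 < var P S →
          corr P S B = κ * (∫ ω, S0 ω ∂P) * Real.sqrt (var P B / var P S)) := by
  set c : ℝ := σ * Real.sqrt t with hc
  have hc2 : c ^ 2 = σ ^ 2 * t := by
    rw [hc, mul_pow, sq_sqrt ht.le]
  -- expectation of exp(c Z)
  have hexpZ_int : Integrable (fun ω => rexp (c * Z ω)) P := by
    have := integrable_exp_mul_gauss c
    rw [← hZ] at this
    exact (integrable_map_measure this.aestronglyMeasurable hmZ.aemeasurable).mp this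
  have hexpZ : ∫ ω, rexp (c * Z ω) ∂P = rexp (c ^ 2 / 2) := by
    rw [← integral_exp_mul_gauss c, ← hZ,
      integral_map hmZ.aemeasurable
        (by exact (measurable_const.mul measurable_id).exp.aestronglyMeasurable)]
  -- rewrite S0
  have hS0' : S0 = fun ω => (s * rexp ((μ - q - σ ^ 2 / 2) * t)) * rexp (c * Z ω) := by
    rw [hS0]; funext ω; rw [Real.exp_add, ← mul_assoc]
  have hS0int : Integrable S0 P := by
    rw [hS0']; exact hexpZ_int.const_mul _
  have hES0 : ∫ ω, S0 ω ∂P = s * rexp ((μ - q) * t) := by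
    rw [hS0', MeasureTheory.integral_const_mul, hexpZ, mul_assoc, ← Real.exp_add, hc2]
    congr 1
    rw [Real.exp_eq_exp]
    ring
  set E0 : ℝ := ∫ ω, S0 ω ∂P with hE0
  -- B facts
  have hBbd : ∀ ω, ‖B ω‖ ≤ 1 := fun ω => by
    rcases hB01 ω with h | h <;> simp [h]
  have hBint : Integrable B P :=
    (integrable_const (1 : ℝ)).mono' hmB.aestronglyMeasurable (ae_of_all _ hBbd)
  have hEB : ∫ ω, B ω ∂P = p := by
    have hms : MeasurableSet {ω | B ω = 1} := hmB (measurableSet_singleton 1)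
    have hBind : B = Set.indicator {ω | B ω = 1} 1 := by
      funext ω
      rcases hB01 ω with h | h <;>
        simp [Set.indicator_apply, Set.mem_setOf_eq, h]
    rw [hBind, integral_indicator_one hms, measureReal_def, hBp, ENNReal.toReal_ofReal hp.1.le]
  have hBB : ∀ ω, B ω * B ω = B ω := fun ω => by
    rcases hB01 ω with h | h <;> simp [h]
  -- independence of S0 and B
  have hindepS0 : IndepFun S0 B P := by
    have h : S0 = (fun z => s * rexp ((μ - q - σ ^ 2 / 2) * t + c * z)) ∘ Z := by
      rw [hS0]; rfl
    rw [h]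
    exact hindep.comp (by fun_prop) measurable_id
  have hS0Bint : Integrable (fun ω => S0 ω * B ω) P := by
    have := hS0int.bdd_mul hmB.aestronglyMeasurable (c := 1) (ae_of_all _ hBbd)
    simpa [mul_comm] using this
  have hES0B : ∫ ω, S0 ω * B ω ∂P = E0 * p := by
    have := hindepS0.integral_mul_eq_mul_integral hS0int.aestronglyMeasurable hBint.aestronglyMeasurable
    rw [← hEB]
    exact this
  -- integrals of S and S*B
  have hSdecomp : S = fun ω => S0 ω + κ * (S0 ω * B ω) := by
    rw [hS]; funext ω; ring
  have hES : ∫ ω, S ω ∂P = E0 + κ * (E0 * p) := by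
    rw [hSdecomp, integral_add hS0int (hS0Bint.const_mul κ), MeasureTheory.integral_const_mul, hES0B, hE0]
  have hSB : (fun ω => S ω * B ω) = fun ω => (1 + κ) * (S0 ω * B ω) := by
    funext ω
    rw [hS]
    have h1 : S0 ω * (1 + κ * B ω) * B ω = S0 ω * B ω + κ * (S0 ω * (B ω * B ω)) := by ring
    rw [h1, hBB ω]
    ring
  have hESB : ∫ ω, S ω * B ω ∂P = (1 + κ) * (E0 * p) := by
    rw [hSB, MeasureTheory.integral_const_mul, hES0B]
  -- covariance and variance values
  have hcov : cov P S B = κ * E0 * (p * (1 - p)) := by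
    rw [cov, hESB, hES, hEB]
    ring
  have hvarB : var P B = p * (1 - p) := by
    rw [var, cov]
    have : (fun ω => B ω * B ω) = B := funext hBB
    rw [this, hEB]
    ring
  refine ⟨by rw [hcov, hvarB], by rw [hcov, hES0], fun hvS => ?_⟩
  rw [corr, hcov, hvarB]
  have hvBpos : (0 : ℝ) < p * (1 - p) := mul_pos hp.1 (by linarith [hp.2])
  set vS : ℝ := var P S
  have hsS : Real.sqrt vS ≠ 0 := ne_of_gt (Real.sqrt_pos.mpr hvS)
  have hsB : Real.sqrt (p * (1 - p)) ≠ 0 := ne_of_gt (Real.sqrt_pos.mpr hvBpos)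
  rw [Real.sqrt_mul hvS.le, Real.sqrt_div hvBpos.le, ← mul_div_assoc,
    div_eq_div_iff (mul_ne_zero hsS hsB) hsS]
  linear_combination (-(κ * E0 * Real.sqrt vS)) * Real.mul_self_sqrt hvBpos.le
end

section
/- Let (Ω, ℱ, ℙ) be a probability space carrying independent random variables Z and B, with Z standard normal and B Bernoulli with parameter p ∈ (0,1). Fix s > 0, σ > 0, t > 0, μ, q ∈ ℝ, κ > −1, and set S := s e^{(μ−q−σ²/2)t + σ√t Z}(1 + κB). Then D := e^{σ²t}(1 + κp(2+κ)) − (1 + κp(2+κp)) > 0, Var(S) = s² e^{2(μ−q)t} D > 0, and the correlation between S and B equals κ √( p(1−p) / D ). -/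
open MeasureTheory intervalIntegral Real ProbabilityTheory Filter Asymptotics

lemma gauss_key (a : ℝ) :
    Integrable (fun x => Real.exp (a * x)) (gaussianReal 0 1) ∧
      ∫ x, Real.exp (a * x) ∂(gaussianReal 0 1) = Real.exp (a ^ 2 / 2) := by
  have hf : Measurable fun x => (gaussianPDFReal 0 1 x).toNNReal :=
    measurable_real_toNNReal.comp (measurable_gaussianPDFReal 0 1)
  have heq : (fun x => (gaussianPDFReal 0 1 x).toNNReal • Real.exp (a * x))
      = fun x => Real.exp (a ^ 2 / 2) * gaussianPDFReal a 1 x := by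
    funext x
    rw [NNReal.smul_def, Real.coe_toNNReal _ (gaussianPDFReal_nonneg 0 1 x)]
    simp only [gaussianPDFReal, NNReal.coe_one]
    rw [smul_eq_mul, mul_assoc, ← Real.exp_add, mul_left_comm, ← Real.exp_add]
    congr 2
    ring
  have hmeq : gaussianReal 0 1
      = MeasureTheory.volume.withDensity (fun x => ((gaussianPDFReal 0 1 x).toNNReal : ENNReal)) := by
    rw [gaussianReal_of_var_ne_zero 0 one_ne_zero]
    rfl
  constructor
  · rw [hmeq, integrable_withDensity_iff_integrable_smul hf, heq]
    exact (integrable_gaussianPDFReal a 1).const_mul _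
  · rw [hmeq, integral_withDensity_eq_integral_smul hf, heq,
      MeasureTheory.integral_const_mul, integral_gaussianPDFReal_eq_one a one_ne_zero, mul_one]

lemma exp_moment {Ω : Type*} [MeasurableSpace Ω] (P : Measure Ω) (Z : Ω → ℝ)
    (hmZ : Measurable Z) (hZ : Measure.map Z P = gaussianReal 0 1) (a : ℝ) :
    Integrable (fun ω => Real.exp (a * Z ω)) P ∧
      ∫ ω, Real.exp (a * Z ω) ∂P = Real.exp (a ^ 2 / 2) := by
  have hg : AEStronglyMeasurable (fun x => Real.exp (a * x)) (Measure.map Z P) :=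
    (Real.continuous_exp.comp (continuous_const.mul continuous_id)).aestronglyMeasurable
  constructor
  · have h := (gauss_key a).1
    rw [← hZ] at h
    exact (integrable_map_measure hg hmZ.aemeasurable).mp h
  · have h := integral_map hmZ.aemeasurable hg
    rw [hZ] at h
    rw [← h]
    exact (gauss_key a).2

lemma bern_moment {Ω : Type*} [MeasurableSpace Ω] (P : Measure Ω) [IsFiniteMeasure P] (B : Ω → ℝ)
    (hmB : Measurable B) (hB01 : ∀ ω, B ω = 0 ∨ B ω = 1) {p : ℝ} (hp0 : 0 ≤ p)
    (hBp : P {ω | B ω = 1} = ENNReal.ofReal p) :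
    Integrable B P ∧ ∫ ω, B ω ∂P = p := by
  have hsetm : MeasurableSet {ω | B ω = 1} := hmB (measurableSet_singleton 1)
  have hBind : B = Set.indicator {ω | B ω = 1} (fun _ => (1:ℝ)) := by
    funext ω
    rcases hB01 ω with h | h
    · simp [Set.indicator_apply, h]
    · simp [Set.indicator_apply, h]
  constructor
  · rw [hBind]; exact (integrable_const (1:ℝ)).indicator hsetm
  · rw [hBind, integral_indicator_const (1:ℝ) hsetm, Measure.real, hBp, smul_eq_mul, mul_one,
      ENNReal.toReal_ofReal hp0]

set_option maxHeartbeats 1000000 in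
/-- Closed-form stock–default correlation: positivity of the variance factor `D`,
explicit variance of `S`, and `corr(S,B) = κ √(p(1−p)/D)`. -/
theorem stock_default_correlation_closed_form
    {Ω : Type*} [MeasurableSpace Ω] (P : Measure Ω) [IsProbabilityMeasure P]
    (Z B : Ω → ℝ) (hmZ : Measurable Z) (hmB : Measurable B)
    (hindep : IndepFun Z B P)
    (hZ : Measure.map Z P = gaussianReal 0 1)
    (p : ℝ) (hp : p ∈ Set.Ioo (0 : ℝ) 1)
    (hB01 : ∀ ω, B ω = 0 ∨ B ω = 1)
    (hBp : P {ω | B ω = 1} = ENNReal.ofReal p)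
    (s σ t μ q κ : ℝ) (hs : 0 < s) (hσ : 0 < σ) (ht : 0 < t) (hκ : -1 < κ)
    (S : Ω → ℝ)
    (hS : S = fun ω =>
      s * Real.exp ((μ - q - σ ^ 2 / 2) * t + σ * Real.sqrt t * Z ω) * (1 + κ * B ω))
    (D : ℝ)
    (hD : D = Real.exp (σ ^ 2 * t) * (1 + κ * p * (2 + κ)) - (1 + κ * p * (2 + κ * p))) :
    0 < D
      ∧ var P S = s ^ 2 * Real.exp (2 * (μ - q) * t) * D
      ∧ 0 < var P S
      ∧ corr P S B = κ * Real.sqrt (p * (1 - p) / D) := by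
  obtain ⟨hp0, hp1⟩ := hp
  have ha2 : (σ * Real.sqrt t) ^ 2 = σ ^ 2 * t := by
    rw [mul_pow, Real.sq_sqrt ht.le]
  set a := σ * Real.sqrt t with ha
  set c := s * Real.exp ((μ - q - σ ^ 2 / 2) * t) with hc
  have hcpos : 0 < c := by positivity
  obtain ⟨hA1i, hA1⟩ := exp_moment P Z hmZ hZ a
  obtain ⟨hA2i, hA2⟩ := exp_moment P Z hmZ hZ (2 * a)
  obtain ⟨hBi, hEB⟩ := bern_moment P B hmB hB01 hp0.le hBp
  set W := fun ω => 1 + κ * B ω with hW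
  have hWi : Integrable W P := (integrable_const 1).add (hBi.const_mul κ)
  have hEW : ∫ ω, W ω ∂P = 1 + κ * p := by
    rw [hW, MeasureTheory.integral_add (integrable_const 1) (hBi.const_mul κ), MeasureTheory.integral_const_mul, hEB,
      MeasureTheory.integral_const]
    simp
  have hWsq : (fun ω => W ω * W ω) = fun ω => 1 + (2 * κ + κ ^ 2) * B ω := by
    funext ω
    rcases hB01 ω with h | h <;> simp [hW, h] <;> ring
  have hW2i : Integrable (fun ω => W ω * W ω) P := by
    rw [hWsq]; exact (integrable_const 1).add (hBi.const_mul _)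
  have hEW2 : ∫ ω, W ω * W ω ∂P = 1 + (2 * κ + κ ^ 2) * p := by
    rw [hWsq, MeasureTheory.integral_add (integrable_const 1) (hBi.const_mul _), MeasureTheory.integral_const_mul, hEB,
      MeasureTheory.integral_const]
    simp
  have hWB : (fun ω => W ω * B ω) = fun ω => (1 + κ) * B ω := by
    funext ω
    rcases hB01 ω with h | h <;> simp [hW, h] <;> ring
  have hWBi : Integrable (fun ω => W ω * B ω) P := by rw [hWB]; exact hBi.const_mul _
  have hEWB : ∫ ω, W ω * B ω ∂P = (1 + κ) * p := by rw [hWB, MeasureTheory.integral_const_mul, hEB]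
  have hEB2 : ∫ ω, B ω * B ω ∂P = p := by
    rw [show (fun ω => B ω * B ω) = fun ω => B ω by
      funext ω; rcases hB01 ω with h | h <;> simp [h]]
    exact hEB
  have hi1 : IndepFun (fun ω => Real.exp (a * Z ω)) W P :=
    hindep.comp (φ := fun x => Real.exp (a * x)) (ψ := fun x => 1 + κ * x)
      (Real.measurable_exp.comp (measurable_id.const_mul a))
      ((measurable_id.const_mul κ).const_add 1)
  have hi2 : IndepFun (fun ω => Real.exp (2 * a * Z ω)) (fun ω => W ω * W ω) P :=
    hindep.comp (φ := fun x => Real.exp (2 * a * x))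
      (ψ := fun x => (1 + κ * x) * (1 + κ * x))
      (Real.measurable_exp.comp (measurable_id.const_mul (2 * a)))
      (((measurable_id.const_mul κ).const_add 1).mul ((measurable_id.const_mul κ).const_add 1))
  have hi3 : IndepFun (fun ω => Real.exp (a * Z ω)) (fun ω => W ω * B ω) P :=
    hindep.comp (φ := fun x => Real.exp (a * x)) (ψ := fun x => (1 + κ * x) * x)
      (Real.measurable_exp.comp (measurable_id.const_mul a))
      ((((measurable_id.const_mul κ).const_add 1)).mul measurable_id)
  have hP1 : ∫ ω, Real.exp (a * Z ω) * W ω ∂P = Real.exp (a ^ 2 / 2) * (1 + κ * p) := by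
    rw [hi1.integral_fun_mul_eq_mul_integral hA1i.1 hWi.1, hA1, hEW]
  have hP2 : ∫ ω, Real.exp (2 * a * Z ω) * (W ω * W ω) ∂P
      = Real.exp ((2 * a) ^ 2 / 2) * (1 + (2 * κ + κ ^ 2) * p) := by
    rw [hi2.integral_fun_mul_eq_mul_integral hA2i.1 hW2i.1, hA2, hEW2]
  have hP3 : ∫ ω, Real.exp (a * Z ω) * (W ω * B ω) ∂P
      = Real.exp (a ^ 2 / 2) * ((1 + κ) * p) := by
    rw [hi3.integral_fun_mul_eq_mul_integral hA1i.1 hWBi.1, hA1, hEWB]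
  have hSdef : S = fun ω => c * (Real.exp (a * Z ω) * W ω) := by
    subst hS; funext ω; rw [Real.exp_add]; ring
  have hES : ∫ ω, S ω ∂P = c * (Real.exp (a ^ 2 / 2) * (1 + κ * p)) := by
    rw [hSdef, MeasureTheory.integral_const_mul, hP1]
  have hSS : (fun ω => S ω * S ω)
      = fun ω => c ^ 2 * (Real.exp (2 * a * Z ω) * (W ω * W ω)) := by
    rw [hSdef]
    funext ω
    have h2 : Real.exp (2 * a * Z ω) = Real.exp (a * Z ω) * Real.exp (a * Z ω) := by
      rw [← Real.exp_add]; congr 1; ring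
    rw [h2]; ring
  have hES2 : ∫ ω, S ω * S ω ∂P
      = c ^ 2 * (Real.exp ((2 * a) ^ 2 / 2) * (1 + (2 * κ + κ ^ 2) * p)) := by
    rw [hSS, MeasureTheory.integral_const_mul, hP2]
  have hSB : (fun ω => S ω * B ω) = fun ω => c * (Real.exp (a * Z ω) * (W ω * B ω)) := by
    rw [hSdef]; funext ω; ring
  have hESB : ∫ ω, S ω * B ω ∂P = c * (Real.exp (a ^ 2 / 2) * ((1 + κ) * p)) := by
    rw [hSB, MeasureTheory.integral_const_mul, hP3]
  -- numeric identities
  have hexpX : Real.exp (a ^ 2 / 2) ^ 2 = Real.exp (σ ^ 2 * t) := by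
    rw [sq, ← Real.exp_add]; congr 1; rw [← ha2]; ring
  have hexp2 : Real.exp ((2 * a) ^ 2 / 2) = Real.exp (σ ^ 2 * t) * Real.exp (σ ^ 2 * t) := by
    rw [← Real.exp_add]; congr 1; rw [← ha2]; ring
  have hXgt : 1 < Real.exp (σ ^ 2 * t) := by
    have : Real.exp 0 < Real.exp (σ ^ 2 * t) := Real.exp_lt_exp.mpr (by positivity)
    simpa using this
  have hc2 : c ^ 2 * Real.exp (σ ^ 2 * t) = s ^ 2 * Real.exp (2 * (μ - q) * t) := by
    have h : Real.exp ((μ - q - σ ^ 2 / 2) * t) * Real.exp ((μ - q - σ ^ 2 / 2) * t)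
        * Real.exp (σ ^ 2 * t) = Real.exp (2 * (μ - q) * t) := by
      rw [← Real.exp_add, ← Real.exp_add]; congr 1; ring
    rw [hc]
    linear_combination s ^ 2 * h
  have hDpos : 0 < D := by
    have h1 : 0 < p * (1 + κ) ^ 2 + (1 - p) := by nlinarith [sq_nonneg (1 + κ)]
    have h2 : 0 < (Real.exp (σ ^ 2 * t) - 1) * (p * (1 + κ) ^ 2 + (1 - p)) :=
      mul_pos (by linarith) h1
    have h3 : 0 ≤ κ ^ 2 * (p * (1 - p)) :=
      mul_nonneg (sq_nonneg κ) (mul_nonneg hp0.le (by linarith))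
    have hid : D = (Real.exp (σ ^ 2 * t) - 1) * (p * (1 + κ) ^ 2 + (1 - p))
        + κ ^ 2 * (p * (1 - p)) := by rw [hD]; ring
    rw [hid]; linarith
  have hvarS : var P S = s ^ 2 * Real.exp (2 * (μ - q) * t) * D := by
    rw [var, cov, hES2, hES, hD, hexp2]
    linear_combination (Real.exp (σ ^ 2 * t) * (1 + κ * p * (2 + κ))
        - (1 + κ * p * (2 + κ * p))) * hc2
      - c ^ 2 * (1 + κ * p) ^ 2 * hexpX
  have hvarB : var P B = p * (1 - p) := by rw [var, cov, hEB2, hEB]; ring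
  have hcovSB : cov P S B
      = (c * Real.exp (a ^ 2 / 2)) * (κ * (p * (1 - p))) := by
    rw [cov, hESB, hES, hEB]; ring
  have hce : (c * Real.exp (a ^ 2 / 2)) ^ 2 = s ^ 2 * Real.exp (2 * (μ - q) * t) := by
    linear_combination c ^ 2 * hexpX + hc2
  have hv1 : 0 < p * (1 - p) := mul_pos hp0 (by linarith)
  have hepos : 0 < c * Real.exp (a ^ 2 / 2) := by positivity
  refine ⟨hDpos, hvarS, ?_, ?_⟩
  · rw [hvarS]
    exact mul_pos (by positivity) hDpos
  · rw [corr, hcovSB, hvarS, hvarB, ← hce]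
    have hsqrt : Real.sqrt ((c * Real.exp (a ^ 2 / 2)) ^ 2 * D * (p * (1 - p)))
        = (c * Real.exp (a ^ 2 / 2)) * Real.sqrt (D * (p * (1 - p))) := by
      rw [mul_assoc, Real.sqrt_mul (sq_nonneg _), Real.sqrt_sq hepos.le]
    rw [hsqrt]
    have hsd : 0 < Real.sqrt (D * (p * (1 - p))) :=
      Real.sqrt_pos.mpr (mul_pos hDpos hv1)
    have hkey : Real.sqrt (p * (1 - p) / D)
        = (p * (1 - p)) / Real.sqrt (D * (p * (1 - p))) := by
      rw [eq_div_iff hsd.ne', ← Real.sqrt_mul (by positivity : (0:ℝ) ≤ p * (1 - p) / D),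
        show p * (1 - p) / D * (D * (p * (1 - p))) = (p * (1 - p)) ^ 2 by
          field_simp,
        Real.sqrt_sq hv1.le]
    rw [hkey, mul_div_mul_left _ _ hepos.ne', mul_div_assoc]
end

section
/- Let t ≥ 0, x ≠ 0 and y ∈ ℝ with c := 2x + y² > 0. Then ∫_0^t e^{−xu} Φ(y√u) du = (y/(x√c)) (Φ(√(ct)) − 1/2) − (1/x) (e^{−xt} Φ(y√t) − 1/2), i.e. the integral equals Υ₀(t,x,y). -/
open MeasureTheory intervalIntegral Real ProbabilityTheory Filter Asymptotics

lemma gaussPdf_eq : gaussPdf = fun x => Real.exp (-(1/2) * x ^ 2) / Real.sqrt (2 * Real.pi) := by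
  funext x
  unfold gaussPdf
  congr 1
  ring_nf

lemma continuous_gaussPdf : Continuous gaussPdf := by
  unfold gaussPdf; fun_prop

lemma integrable_gaussPdf : Integrable gaussPdf := by
  rw [gaussPdf_eq]
  exact (integrable_exp_neg_mul_sq (by norm_num)).div_const _

lemma integral_gaussPdf : ∫ x, gaussPdf x = 1 := by
  rw [gaussPdf_eq]
  rw [MeasureTheory.integral_div, integral_gaussian]
  rw [show π / (1/2) = 2 * π by ring]
  exact div_self (by positivity)

lemma Phi_eq (x : ℝ) : Phi x = ∫ u in Set.Iic x, gaussPdf u := rfl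

lemma Phi_zero : Phi 0 = 1/2 := by
  have hIic : IntegrableOn gaussPdf (Set.Iic 0) := integrable_gaussPdf.integrableOn
  have hIoi : IntegrableOn gaussPdf (Set.Ioi 0) := integrable_gaussPdf.integrableOn
  have heven : ∀ u : ℝ, gaussPdf (-u) = gaussPdf u := by
    intro u; unfold gaussPdf; rw [neg_pow]; norm_num
  have hsym : ∫ u in Set.Iic (0:ℝ), gaussPdf u = ∫ u in Set.Ioi (0:ℝ), gaussPdf u := by
    have := integral_comp_neg_Iic (0:ℝ) gaussPdf
    simp only [heven, neg_zero] at this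
    exact this
  have htot : (∫ u in Set.Iic (0:ℝ), gaussPdf u) + ∫ u in Set.Ioi (0:ℝ), gaussPdf u = 1 := by
    rw [integral_Iic_add_Ioi hIic hIoi, integral_gaussPdf]
  rw [Phi_eq]
  linarith
lemma hasDerivAt_Phi (x : ℝ) : HasDerivAt Phi (gaussPdf x) x := by
  have key : ∀ z : ℝ, Phi z = Phi 0 + ∫ u in (0:ℝ)..z, gaussPdf u := by
    intro z
    rw [Phi_eq, Phi_eq, ← integral_Iic_sub_Iic integrable_gaussPdf.integrableOn
      integrable_gaussPdf.integrableOn]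
    ring
  have h : HasDerivAt (fun z => Phi 0 + ∫ u in (0:ℝ)..z, gaussPdf u) (gaussPdf x) x := by
    exact (intervalIntegral.integral_hasDerivAt_right
      (integrable_gaussPdf.intervalIntegrable)
      continuous_gaussPdf.aestronglyMeasurable.stronglyMeasurableAtFilter
      continuous_gaussPdf.continuousAt).const_add _
  exact h.congr_of_eventuallyEq (Filter.Eventually.of_forall key)

lemma continuous_Phi : Continuous Phi :=
  continuous_iff_continuousAt.mpr fun z => (hasDerivAt_Phi z).continuousAt

/-- Lemma `upsilon-function`: `∫_0^t e^{−xu} Φ(y√u) du = Υ₀(t,x,y)`. -/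
theorem integral_exp_mul_Phi (t x y : ℝ) (ht : 0 ≤ t) (hx : x ≠ 0)
    (hc : 0 < 2 * x + y ^ 2) :
    ∫ u in (0 : ℝ)..t, Real.exp (-x * u) * Phi (y * Real.sqrt u) = Ups0 t x y := by
  set c : ℝ := 2 * x + y ^ 2 with hcdef
  have hF0 : Ups0 0 x y = 0 := by
    unfold Ups0
    simp [Phi_zero]
  have hcont : ContinuousOn (fun u => Ups0 u x y) (Set.Icc 0 t) := by
    apply Continuous.continuousOn
    unfold Ups0
    exact (continuous_const.mul ((continuous_Phi.comp
        (Real.continuous_sqrt.comp (continuous_const.mul continuous_id))).sub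
        continuous_const)).sub
      (continuous_const.mul (((Real.continuous_exp.comp (continuous_const.mul continuous_id)).mul
        (continuous_Phi.comp (continuous_const.mul Real.continuous_sqrt))).sub
        continuous_const))
  have hint : IntervalIntegrable (fun u => Real.exp (-x * u) * Phi (y * Real.sqrt u))
      volume 0 t := by
    apply Continuous.intervalIntegrable
    exact (Real.continuous_exp.comp (continuous_const.mul continuous_id)).mul
      (continuous_Phi.comp (continuous_const.mul Real.continuous_sqrt))
  have hderiv : ∀ u ∈ Set.Ioo 0 t,
      HasDerivAt (fun u => Ups0 u x y) (Real.exp (-x * u) * Phi (y * Real.sqrt u)) u := by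
    intro u hu
    have hu0 : 0 < u := hu.1
    have hcu : 0 < c * u := mul_pos hc hu0
    have hsu : 0 < Real.sqrt u := Real.sqrt_pos.mpr hu0
    have hsc : 0 < Real.sqrt c := Real.sqrt_pos.mpr hc
    have h1 : HasDerivAt (fun u : ℝ => c * u) c u := by
      simpa using (hasDerivAt_id u).const_mul c
    have h2 : HasDerivAt (fun u : ℝ => Real.sqrt (c * u))
        (1 / (2 * Real.sqrt (c * u)) * c) u :=
      (Real.hasDerivAt_sqrt hcu.ne').comp u h1
    have h3 : HasDerivAt (fun u : ℝ => Phi (Real.sqrt (c * u)))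
        (gaussPdf (Real.sqrt (c * u)) * (1 / (2 * Real.sqrt (c * u)) * c)) u :=
      (hasDerivAt_Phi _).comp u h2
    have h4 : HasDerivAt (fun u : ℝ => y * Real.sqrt u) (y * (1 / (2 * Real.sqrt u))) u := by
      simpa [mul_comm] using (Real.hasDerivAt_sqrt hu0.ne').const_mul y
    have h5 : HasDerivAt (fun u : ℝ => Phi (y * Real.sqrt u))
        (gaussPdf (y * Real.sqrt u) * (y * (1 / (2 * Real.sqrt u)))) u :=
      (hasDerivAt_Phi _).comp u h4
    have h6 : HasDerivAt (fun u : ℝ => Real.exp (-x * u)) (Real.exp (-x * u) * (-x)) u := by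
      simpa using ((hasDerivAt_id u).const_mul (-x)).exp
    have h7 := h6.mul h5
    have H := ((h3.sub_const (1/2)).const_mul (y / (x * Real.sqrt c))).sub
      ((h7.sub_const (1/2)).const_mul (1 / x))
    have key : gaussPdf (Real.sqrt (c * u)) =
        Real.exp (-x * u) * gaussPdf (y * Real.sqrt u) := by
      unfold gaussPdf
      rw [Real.sq_sqrt hcu.le, mul_pow, Real.sq_sqrt hu0.le, ← mul_div_assoc, ← Real.exp_add]
      congr 2
      rw [hcdef]; ring
    refine H.congr_deriv ?_
    symm
    rw [key, Real.sqrt_mul hc.le]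
    have hrr : Real.sqrt c * Real.sqrt c = c := Real.mul_self_sqrt hc.le
    generalize hr : Real.sqrt c = r at *
    rw [← hrr]
    field_simp
    ring
  rw [intervalIntegral.integral_eq_sub_of_hasDerivAt_of_le ht hcont hderiv hint, hF0, sub_zero]
end

section
/- Let x ≠ 0 and y ∈ ℝ with c := 2x + y² > 0, and let 0 ≤ ε ≤ t. Then ∫_ε^t e^{−xu} Φ(y√u) du = (y/(x√c)) ( Φ(√(ct)) − Φ(√(cε)) ) − (1/x) ( e^{−xt} Φ(y√t) − e^{−xε} Φ(y√ε) ). -/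
open MeasureTheory intervalIntegral Real ProbabilityTheory Filter Asymptotics

lemma integrable_gaussPdf' : MeasureTheory.Integrable gaussPdf := by
  have h : MeasureTheory.Integrable (fun u : ℝ => Real.exp (-(1/2) * u ^ 2)) :=
    integrable_exp_neg_mul_sq (by norm_num)
  have := h.div_const (Real.sqrt (2 * Real.pi))
  refine this.congr (Filter.Eventually.of_forall fun u => ?_)
  simp [gaussPdf]; ring_nf

/-- `∫_ε^t e^{−xu} Φ(y√u) du` in closed form, for `x ≠ 0` and `c = 2x + y² > 0`. -/
theorem integral_exp_mul_Phi_from_eps (x y ε t : ℝ) (hx : x ≠ 0)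
    (hc : 0 < 2 * x + y ^ 2) (hε : 0 ≤ ε) (hεt : ε ≤ t) :
    ∫ u in ε..t, Real.exp (-x * u) * Phi (y * Real.sqrt u)
      = y / (x * Real.sqrt (2 * x + y ^ 2)) *
          (Phi (Real.sqrt ((2 * x + y ^ 2) * t)) - Phi (Real.sqrt ((2 * x + y ^ 2) * ε)))
        - 1 / x * (Real.exp (-x * t) * Phi (y * Real.sqrt t)
            - Real.exp (-x * ε) * Phi (y * Real.sqrt ε)) := by
  set c := 2 * x + y ^ 2 with hcdef
  clear_value c
  have hsc : 0 < Real.sqrt c := Real.sqrt_pos.2 hc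
  have h2pi : Real.sqrt (2 * Real.pi) ≠ 0 :=
    (Real.sqrt_pos.2 (by positivity)).ne'
  set F : ℝ → ℝ := fun u => y / (x * Real.sqrt c) * Phi (Real.sqrt (c * u))
      - 1 / x * (Real.exp (-x * u) * Phi (y * Real.sqrt u)) with hFdef
  have hcontF : ContinuousOn F (Set.Icc ε t) := by
    apply Continuous.continuousOn
    apply Continuous.sub
    · exact continuous_const.mul (continuous_Phi.comp
        ((continuous_const.mul continuous_id).sqrt))
    · exact continuous_const.mul ((Real.continuous_exp.comp
        (continuous_const.mul continuous_id)).mul (continuous_Phi.comp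
        (continuous_const.mul Real.continuous_sqrt)))
  have hcontf : Continuous fun u : ℝ => Real.exp (-x * u) * Phi (y * Real.sqrt u) :=
    (Real.continuous_exp.comp (continuous_const.mul continuous_id)).mul
      (continuous_Phi.comp (continuous_const.mul Real.continuous_sqrt))
  have hderiv : ∀ u ∈ Set.Ioo ε t,
      HasDerivAt F (Real.exp (-x * u) * Phi (y * Real.sqrt u)) u := by
    intro u hu
    have hu0 : 0 < u := lt_of_le_of_lt hε hu.1
    have hsu : Real.sqrt u ≠ 0 := (Real.sqrt_pos.2 hu0).ne'
    -- derivative of √(c·u)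
    have h1 : HasDerivAt (fun v : ℝ => Real.sqrt (c * v))
        (c / (2 * Real.sqrt (c * u))) u := by
      have hcu : c * u ≠ 0 := (mul_pos hc hu0).ne'
      have h := (Real.hasDerivAt_sqrt hcu).comp u
        ((hasDerivAt_id u).const_mul c)
      have heq : 1 / (2 * Real.sqrt (c * u)) * (c * 1) = c / (2 * Real.sqrt (c * u)) := by
        ring
      rw [heq] at h
      exact h
    have h2 : HasDerivAt (fun v : ℝ => Phi (Real.sqrt (c * v)))
        (gaussPdf (Real.sqrt (c * u)) * (c / (2 * Real.sqrt (c * u)))) u :=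
      (hasDerivAt_Phi _).comp u h1
    have h3 : HasDerivAt (fun v : ℝ => Real.exp (-x * v))
        (Real.exp (-x * u) * (-x)) u := by
      have := ((hasDerivAt_id u).const_mul (-x)).exp
      simpa [mul_comm] using this
    have h4 : HasDerivAt (fun v : ℝ => Phi (y * Real.sqrt v))
        (gaussPdf (y * Real.sqrt u) * (y * (1 / (2 * Real.sqrt u)))) u :=
      (hasDerivAt_Phi _).comp u ((Real.hasDerivAt_sqrt hu0.ne').const_mul y)
    have h5 : HasDerivAt F
        (y / (x * Real.sqrt c) *
            (gaussPdf (Real.sqrt (c * u)) * (c / (2 * Real.sqrt (c * u))))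
          - 1 / x * (Real.exp (-x * u) * (-x) * Phi (y * Real.sqrt u)
              + Real.exp (-x * u) *
                (gaussPdf (y * Real.sqrt u) * (y * (1 / (2 * Real.sqrt u)))))) u :=
      (h2.const_mul _).sub ((h3.mul h4).const_mul _)
    convert h5 using 1
    have e1 : gaussPdf (Real.sqrt (c * u))
        = Real.exp (-(c * u) / 2) / Real.sqrt (2 * Real.pi) := by
      rw [gaussPdf, Real.sq_sqrt (mul_pos hc hu0).le]
    have e2 : gaussPdf (y * Real.sqrt u)
        = Real.exp (x * u) * (Real.exp (-(c * u) / 2) / Real.sqrt (2 * Real.pi)) := by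
      rw [gaussPdf, mul_pow, Real.sq_sqrt hu0.le, ← mul_div_assoc, ← Real.exp_add]
      congr 2
      simp only [hcdef]; ring
    have e3 : Real.sqrt (c * u) = Real.sqrt c * Real.sqrt u := Real.sqrt_mul hc.le u
    rw [e1, e2, e3, show Real.exp (-x * u) = (Real.exp (x * u))⁻¹ by
      rw [← Real.exp_neg, neg_mul]]
    field_simp
    ring_nf
    linear_combination (y * Real.exp (x * u) * Real.exp (u * c * (-1 / 2))) * Real.sq_sqrt hc.le
  have key := intervalIntegral.integral_eq_sub_of_hasDeriv_right_of_le hεt hcontF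
    (fun u hu => (hderiv u hu).hasDerivWithinAt) (hcontf.intervalIntegrable ε t)
  rw [key, hFdef]
  ring
end

section
/- Let s > 0, k > 0, σ > 0, t > 0 and m ∈ ℝ. Then ∫_ℝ max{ s e^{(m−σ²/2)t + σ√t·ζ} − k, 0 } dγ(ζ) = s e^{mt} Φ(d₁(t)) − k Φ(d₂(t)) = BS_C(s,k,t). (This is the Black–Scholes formula for the undiscounted price of a European call option on an asset whose price at time t is lognormal with drift m and volatility σ.) -/
open MeasureTheory intervalIntegral Real ProbabilityTheory Filter Asymptotics

lemma gaussPdf_eq_s12 (x : ℝ) : gaussianPDFReal 0 1 x = gaussPdf x := by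
  simp only [gaussianPDFReal, gaussPdf, NNReal.coe_one, mul_one, sub_zero]
  rw [inv_mul_eq_div, neg_div]

lemma myIntegral_Iic_add (f : ℝ → ℝ) (c b : ℝ) :
    ∫ x in Set.Iic c, f (x + b) = ∫ x in Set.Iic (c + b), f x := by
  have A : MeasurableEmbedding (fun x : ℝ => x + b) :=
    (Homeomorph.addRight b).isClosedEmbedding.measurableEmbedding
  have h := A.setIntegral_map (μ := volume) f (Set.Iic (c + b))
  rw [map_add_right_eq_self volume b] at h
  rw [h, Set.preimage_add_const_Iic, add_sub_cancel_right]

lemma key_gauss (b c : ℝ) :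
    ∫ x in Set.Ioi c, Real.exp (b * x) * gaussPdf x
      = Real.exp (b ^ 2 / 2) * Phi (b - c) := by
  have h1 : ∀ x : ℝ, Real.exp (b * x) * gaussPdf x
      = Real.exp (b ^ 2 / 2) * gaussPdf (-x + b) := by
    intro x
    simp only [gaussPdf]
    rw [mul_div_assoc', mul_div_assoc', ← Real.exp_add, ← Real.exp_add]
    congr 2
    ring
  calc ∫ x in Set.Ioi c, Real.exp (b * x) * gaussPdf x
      = ∫ x in Set.Ioi c, Real.exp (b ^ 2 / 2) * (fun u => gaussPdf (u + b)) (-x) := by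
        refine setIntegral_congr_fun measurableSet_Ioi fun x _ => ?_
        exact h1 x
    _ = Real.exp (b ^ 2 / 2) * ∫ x in Set.Ioi c, (fun u => gaussPdf (u + b)) (-x) := by
        rw [MeasureTheory.integral_const_mul]
    _ = Real.exp (b ^ 2 / 2) * ∫ u in Set.Iic (-c), gaussPdf (u + b) := by
        congr 1
        exact integral_comp_neg_Ioi c fun u => gaussPdf (u + b)
    _ = Real.exp (b ^ 2 / 2) * Phi (b - c) := by
        rw [myIntegral_Iic_add, show -c + b = b - c by ring]
        rfl

lemma integrable_exp_mul_gaussPdf (b : ℝ) :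
    Integrable (fun x => Real.exp (b * x) * gaussPdf x) := by
  have h : ∀ x : ℝ, Real.exp (b * x) * gaussPdf x
      = Real.exp (b ^ 2 / 2) * gaussianPDFReal b 1 x := by
    intro x
    simp only [gaussianPDFReal, NNReal.coe_one, mul_one, gaussPdf]
    rw [mul_div_assoc', inv_mul_eq_div, mul_div_assoc', ← Real.exp_add, ← Real.exp_add]
    congr 2
    ring
  refine ((integrable_gaussianPDFReal b 1).const_mul (Real.exp (b ^ 2 / 2))).congr ?_
  filter_upwards with x
  exact (h x).symm

lemma integral_gaussMeasure (g : ℝ → ℝ) :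
    ∫ ζ, g ζ ∂gaussMeasure = ∫ ζ, gaussPdf ζ * g ζ := by
  rw [show gaussMeasure = volume.withDensity (gaussianPDF 0 1) from
    gaussianReal_of_var_ne_zero 0 one_ne_zero]
  rw [show gaussianPDF 0 1 = fun x => ((Real.toNNReal (gaussianPDFReal 0 1 x) : NNReal) : ENNReal)
    from rfl]
  rw [integral_withDensity_eq_integral_smul
    ((measurable_gaussianPDFReal 0 1).real_toNNReal) g]
  congr 1
  funext x
  rw [NNReal.smul_def, smul_eq_mul, Real.coe_toNNReal _ (gaussianPDFReal_nonneg 0 1 x),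
    gaussPdf_eq_s12]

/-- Black–Scholes formula for the undiscounted price of a European call option on
a lognormal asset with drift `m` and volatility `σ`. -/
theorem black_scholes_call (σ m s k t : ℝ) (hs : 0 < s) (hk : 0 < k)
    (hσ : 0 < σ) (ht : 0 < t) :
    (∫ ζ, max (s * Real.exp ((m - σ ^ 2 / 2) * t + σ * Real.sqrt t * ζ) - k) 0 ∂gaussMeasure)
        = s * Real.exp (m * t) * Phi (d1 σ m s k t) - k * Phi (d2 σ m s k t)
      ∧ s * Real.exp (m * t) * Phi (d1 σ m s k t) - k * Phi (d2 σ m s k t)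
        = BSC σ m s k t := by
  refine ⟨?_, rfl⟩
  set a : ℝ := (m - σ ^ 2 / 2) * t with ha
  set b : ℝ := σ * Real.sqrt t with hb
  have hsqrt : 0 < Real.sqrt t := Real.sqrt_pos.mpr ht
  have hbpos : 0 < b := mul_pos hσ hsqrt
  have hbb : b * b = σ ^ 2 * t := by
    rw [hb, mul_mul_mul_comm, Real.mul_self_sqrt ht.le, sq]
  set c : ℝ := -(d2 σ m s k t) with hc
  -- the threshold identity
  have hthr : c = (Real.log (k / s) - a) / b := by
    rw [hc, d2, d1, Real.log_div hk.ne' hs.ne', Real.log_div hs.ne' hk.ne', ← hb, ha]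
    field_simp
    nlinarith [hbb]
  -- strict comparison
  have hcmp : ∀ ζ : ℝ, (k < s * Real.exp (a + b * ζ)) ↔ c < ζ := by
    intro ζ
    rw [hthr, div_lt_iff₀ hbpos, sub_lt_iff_lt_add, show ζ * b + a = a + b * ζ by ring,
      Real.log_lt_iff_lt_exp (div_pos hk hs), div_lt_iff₀ hs,
      mul_comm (Real.exp (a + b * ζ)) s]
  have hcmp' : ∀ ζ : ℝ, (k ≤ s * Real.exp (a + b * ζ)) ↔ c ≤ ζ := by
    intro ζ
    rw [hthr, div_le_iff₀ hbpos, sub_le_iff_le_add, show ζ * b + a = a + b * ζ by ring,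
      Real.log_le_iff_le_exp (div_pos hk hs), div_le_iff₀ hs,
      mul_comm (Real.exp (a + b * ζ)) s]
  -- integrabilities
  have hint1 : IntegrableOn (fun ζ => Real.exp (a) * (Real.exp (b * ζ) * gaussPdf ζ))
      (Set.Ioi c) :=
    (((integrable_exp_mul_gaussPdf b).const_mul (Real.exp a)).restrict)
  have hint2 : IntegrableOn gaussPdf (Set.Ioi c) := integrable_gaussPdf.restrict
  -- main computation
  rw [integral_gaussMeasure]
  have hind : (fun ζ => gaussPdf ζ * max (s * Real.exp (a + b * ζ) - k) 0)
      = Set.indicator (Set.Ioi c)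
          (fun ζ => s * Real.exp a * (Real.exp (b * ζ) * gaussPdf ζ) - k * gaussPdf ζ) := by
    funext ζ
    by_cases h : c < ζ
    · rw [Set.indicator_of_mem (Set.mem_Ioi.mpr h)]
      rw [max_eq_left (by linarith [(hcmp ζ).mpr h])]
      rw [Real.exp_add]
      ring
    · have h2 : ¬ k < s * Real.exp (a + b * ζ) := fun hlt => h ((hcmp ζ).mp hlt)
      rw [Set.indicator_of_notMem (fun hm => h (Set.mem_Ioi.mp hm)),
        max_eq_right (by linarith [not_lt.mp h2]), mul_zero]
  rw [hind, MeasureTheory.integral_indicator measurableSet_Ioi]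
  rw [integral_sub (by simpa [mul_assoc] using hint1.const_mul s) (hint2.const_mul k)]
  rw [MeasureTheory.integral_const_mul, MeasureTheory.integral_const_mul, key_gauss]
  have h0 : ∫ ζ in Set.Ioi c, gaussPdf ζ = Phi (-c) := by
    have := key_gauss 0 c
    simpa using this
  rw [h0]
  have hd1 : b - c = d1 σ m s k t := by rw [hc, d2]; ring
  have hexp : Real.exp a * Real.exp (b ^ 2 / 2) = Real.exp (m * t) := by
    rw [← Real.exp_add, ha]
    congr 1
    nlinarith [hbb]
  rw [hd1, hc, neg_neg]
  rw [show s * Real.exp a * (Real.exp (b ^ 2 / 2) * Phi (d1 σ m s k t))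
      = s * (Real.exp a * Real.exp (b ^ 2 / 2)) * Phi (d1 σ m s k t) by ring, hexp]
end

section
/- Let s > 0, k > 0, σ > 0, t > 0 and m ∈ ℝ. Then ∫_ℝ max{ k − s e^{(m−σ²/2)t + σ√t·ζ}, 0 } dγ(ζ) = k Φ(−d₂(t)) − s e^{mt} Φ(−d₁(t)) = BS_P(s,k,t). (This is the Black–Scholes formula for the undiscounted price of a European put option on an asset whose price at time t is lognormal with drift m and volatility σ.) -/
open MeasureTheory intervalIntegral Real ProbabilityTheory Filter Asymptotics

lemma gaussPdf_nonneg (x : ℝ) : 0 ≤ gaussPdf x :=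
  div_nonneg (Real.exp_pos _).le (Real.sqrt_nonneg _)

lemma gaussPdf_eq_s13 : ProbabilityTheory.gaussianPDFReal 0 1 = gaussPdf := by
  funext x
  simp only [ProbabilityTheory.gaussianPDFReal, gaussPdf, NNReal.coe_one, mul_one, sub_zero]
  rw [div_eq_mul_inv, mul_comm]
  rw [div_eq_mul_inv]

lemma integral_gaussMeasure_eq (f : ℝ → ℝ) :
    ∫ x, f x ∂gaussMeasure = ∫ x, gaussPdf x * f x := by
  rw [gaussMeasure, ProbabilityTheory.gaussianReal_of_var_ne_zero 0 one_ne_zero]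
  have hd : ProbabilityTheory.gaussianPDF 0 1 = fun x => ((Real.toNNReal (gaussPdf x) : NNReal) : ENNReal) := by
    funext x
    rw [ProbabilityTheory.gaussianPDF, gaussPdf_eq_s13]
    rfl
  have hmeas : Measurable fun x => Real.toNNReal (gaussPdf x) := by
    rw [← gaussPdf_eq_s13]
    exact (ProbabilityTheory.measurable_gaussianPDFReal 0 1).real_toNNReal
  rw [hd, integral_withDensity_eq_integral_smul hmeas f]
  congr 1
  funext x
  rw [NNReal.smul_def, smul_eq_mul, Real.coe_toNNReal _ (gaussPdf_nonneg x)]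

/-- Black–Scholes formula for the undiscounted price of a European put option on
a lognormal asset with drift `m` and volatility `σ`. -/
theorem black_scholes_put (σ m s k t : ℝ) (hs : 0 < s) (hk : 0 < k)
    (hσ : 0 < σ) (ht : 0 < t) :
    (∫ ζ, max (k - s * Real.exp ((m - σ ^ 2 / 2) * t + σ * Real.sqrt t * ζ)) 0 ∂gaussMeasure)
        = k * Phi (-d2 σ m s k t) - s * Real.exp (m * t) * Phi (-d1 σ m s k t)
      ∧ k * Phi (-d2 σ m s k t) - s * Real.exp (m * t) * Phi (-d1 σ m s k t)
        = BSP σ m s k t := by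
  refine ⟨?_, rfl⟩
  set b := σ * Real.sqrt t with hb_def
  have hbpos : 0 < b := mul_pos hσ (Real.sqrt_pos.mpr ht)
  have hb2 : b ^ 2 = σ ^ 2 * t := by
    rw [hb_def, mul_pow, Real.sq_sqrt ht.le]
  set a := (m - σ ^ 2 / 2) * t with ha_def
  set c := -d2 σ m s k t with hc_def
  have hlog : Real.log (k / s) = Real.log k - Real.log s := Real.log_div hk.ne' hs.ne'
  have hbd1 : b * d1 σ m s k t = Real.log (s / k) + (m + σ ^ 2 / 2) * t := by
    rw [d1, ← hb_def, mul_div_cancel₀ _ hbpos.ne']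
  have hcbd : c = b - d1 σ m s k t := by rw [hc_def, d2, hb_def]; ring
  have hbc : b * c = Real.log (k / s) - a := by
    rw [hcbd, mul_sub, hbd1, hlog, Real.log_div hs.ne' hk.ne', ha_def]
    linear_combination hb2
  have hcb : c - b = -d1 σ m s k t := by rw [hc_def, d2]; ring
  have hiff : ∀ ζ : ℝ, s * Real.exp (a + b * ζ) ≤ k ↔ ζ ≤ c := by
    intro ζ
    rw [← le_div_iff₀' hs, ← Real.le_log_iff_exp_le (div_pos hk hs)]
    constructor
    · intro h
      have : b * ζ ≤ b * c := by rw [hbc]; linarith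
      exact le_of_mul_le_mul_left this hbpos
    · intro h
      have : b * ζ ≤ b * c := mul_le_mul_of_nonneg_left h hbpos.le
      rw [hbc] at this; linarith
  have hsqrtne : Real.sqrt (2 * Real.pi) ≠ 0 :=
    (Real.sqrt_pos.mpr (by positivity)).ne'
  have key : ∀ ζ : ℝ, s * Real.exp (m * t) * gaussPdf (ζ - b)
      = gaussPdf ζ * (s * Real.exp (a + b * ζ)) := by
    intro ζ
    have hexp : Real.exp (m * t) * Real.exp (-(ζ - b) ^ 2 / 2)
        = Real.exp (-ζ ^ 2 / 2) * Real.exp (a + b * ζ) := by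
      rw [← Real.exp_add, ← Real.exp_add]
      congr 1
      rw [ha_def]
      nlinarith [hb2]
    simp only [gaussPdf]
    rw [mul_div_assoc', div_mul_eq_mul_div, div_left_inj' hsqrtne]
    linear_combination s * hexp
  have hpt : ∀ ζ : ℝ, gaussPdf ζ * max (k - s * Real.exp (a + b * ζ)) 0
      = Set.indicator (Set.Iic c)
          (fun ζ => k * gaussPdf ζ - s * Real.exp (m * t) * gaussPdf (ζ - b)) ζ := by
    intro ζ
    by_cases hζ : ζ ≤ c
    · rw [Set.indicator_of_mem (Set.mem_Iic.mpr hζ)]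
      have h0 : 0 ≤ k - s * Real.exp (a + b * ζ) := sub_nonneg.mpr ((hiff ζ).mpr hζ)
      rw [max_eq_left h0, mul_sub, key ζ]
      ring
    · rw [Set.indicator_of_notMem (by rwa [Set.mem_Iic])]
      have h0 : k - s * Real.exp (a + b * ζ) ≤ 0 := by
        have := (hiff ζ).not.mpr hζ
        push_neg at this
        linarith
      rw [max_eq_right h0, mul_zero]
  have hInt1 : Integrable (fun ζ : ℝ => k * gaussPdf ζ) := integrable_gaussPdf.const_mul k
  have hInt2 : Integrable (fun ζ : ℝ => s * Real.exp (m * t) * gaussPdf (ζ - b)) :=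
    (integrable_gaussPdf.comp_sub_right b).const_mul _
  have hPhi1 : ∫ ζ in Set.Iic c, gaussPdf ζ = Phi c := rfl
  have hPhi2 : ∫ ζ in Set.Iic c, gaussPdf (ζ - b) = Phi (c - b) := by
    have hind : ∀ ζ : ℝ, Set.indicator (Set.Iic c) (fun ζ => gaussPdf (ζ - b)) ζ
        = Set.indicator (Set.Iic (c - b)) gaussPdf (ζ - b) := by
      intro ζ
      by_cases hζ : ζ ≤ c
      · rw [Set.indicator_of_mem (Set.mem_Iic.mpr hζ),
          Set.indicator_of_mem (Set.mem_Iic.mpr (sub_le_sub_right hζ b))]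
      · rw [Set.indicator_of_notMem (by rwa [Set.mem_Iic]),
          Set.indicator_of_notMem (by rw [Set.mem_Iic, sub_le_sub_iff_right]; exact hζ)]
    rw [← MeasureTheory.integral_indicator measurableSet_Iic]
    rw [integral_congr_ae (ae_of_all _ hind)]
    rw [integral_sub_right_eq_self (Set.indicator (Set.Iic (c - b)) gaussPdf) b]
    rw [MeasureTheory.integral_indicator measurableSet_Iic]
    rfl
  calc ∫ ζ, max (k - s * Real.exp (a + b * ζ)) 0 ∂gaussMeasure
      = ∫ ζ, gaussPdf ζ * max (k - s * Real.exp (a + b * ζ)) 0 :=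
        integral_gaussMeasure_eq _
    _ = ∫ ζ, Set.indicator (Set.Iic c)
          (fun ζ => k * gaussPdf ζ - s * Real.exp (m * t) * gaussPdf (ζ - b)) ζ :=
        integral_congr_ae (ae_of_all _ hpt)
    _ = ∫ ζ in Set.Iic c, (k * gaussPdf ζ - s * Real.exp (m * t) * gaussPdf (ζ - b)) :=
        MeasureTheory.integral_indicator measurableSet_Iic
    _ = (∫ ζ in Set.Iic c, k * gaussPdf ζ)
          - ∫ ζ in Set.Iic c, s * Real.exp (m * t) * gaussPdf (ζ - b) :=
        integral_sub hInt1.integrableOn hInt2.integrableOn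
    _ = k * Phi (-d2 σ m s k t) - s * Real.exp (m * t) * Phi (-d1 σ m s k t) := by
        rw [MeasureTheory.integral_const_mul, MeasureTheory.integral_const_mul, hPhi1, hPhi2, hcb, ← hc_def]
end
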